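/- Let a_1, a_2, a_3 be positive real numbers with a_1·a_2·a_3 = 1. Then for every positive integer n and every x ∈ ℝ^n, a_1·p_2(x)^5 + a_2·p_6(x)·p_4(x) + a_3·p_8(x)·p_2(x) − 3·p_6(x)·p_2(x)^2 ≥ 0; that is, the even symmetric form a_1·p_{(2^5)} + a_2·p_{(6,4)} + a_3·p_{(8,2)} − 3·p_{(6,2²)} is nonnegative in any number of variables. -/
import Mathlib


open scoped BigOperators

/-- Power sum `p_r(x) = Σ_i x_i^r`. -/
def psum {n : ℕ} (r : ℕ) (x : Fin n → ℝ) : ℝ :=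
  ∑ i, x i ^ r

lemma amgm3 (u v w : ℝ) (hu : 0 ≤ u) (hv : 0 ≤ v) (hw : 0 ≤ w) :
    27 * (u * v * w) ≤ (u + v + w) ^ 3 := by
  nlinarith [mul_nonneg hu (sq_nonneg (v - w)), mul_nonneg hv (sq_nonneg (u - w)),
    mul_nonneg hw (sq_nonneg (u - v)), mul_nonneg (mul_nonneg hu hv) hw]

/-- For positive reals `a₁, a₂, a₃` with `a₁a₂a₃ = 1`, the even
symmetric form `a₁p_{(2⁵)} + a₂p_{(6,4)} + a₃p_{(8,2)} − 3p_{(6,2²)}` is nonnegative in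
any number of variables. -/
theorem decic_nonneg (a₁ a₂ a₃ : ℝ) (h₁ : 0 < a₁) (h₂ : 0 < a₂) (h₃ : 0 < a₃)
    (h : a₁ * a₂ * a₃ = 1) :
    ∀ n : ℕ, 0 < n → ∀ x : Fin n → ℝ,
      0 ≤ a₁ * psum 2 x ^ 5 + a₂ * psum 6 x * psum 4 x + a₃ * psum 8 x * psum 2 x -
        3 * psum 6 x * psum 2 x ^ 2 := by
  intro n _ x
  have hp : ∀ r : ℕ, 0 ≤ psum (2 * r) x := by
    intro r
    apply Finset.sum_nonneg
    intro i _
    rw [pow_mul]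
    positivity
  have hp2 : 0 ≤ psum 2 x := by simpa using hp 1
  have hp4 : 0 ≤ psum 4 x := by simpa using hp 2
  have hp6 : 0 ≤ psum 6 x := by simpa using hp 3
  have hp8 : 0 ≤ psum 8 x := by simpa using hp 4
  -- Cauchy-Schwarz: p₆² ≤ p₄ * p₈
  have hcs : psum 6 x ^ 2 ≤ psum 4 x * psum 8 x := by
    have hc := Finset.sum_mul_sq_le_sq_mul_sq Finset.univ
      (fun i => x i ^ 2) (fun i => x i ^ 4)
    simp only [← pow_mul, ← pow_add] at hc
    simpa [psum] using hc
  set u := a₁ * psum 2 x ^ 5 with hU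
  set v := a₂ * (psum 6 x * psum 4 x) with hV
  set w := a₃ * (psum 8 x * psum 2 x) with hW
  have hu : 0 ≤ u := by positivity
  have hv : 0 ≤ v := by positivity
  have hw : 0 ≤ w := by positivity
  have key : (3 * psum 6 x * psum 2 x ^ 2) ^ 3 ≤ (u + v + w) ^ 3 := by
    have h1 : 27 * (u * v * w) ≤ (u + v + w) ^ 3 := amgm3 u v w hu hv hw
    have h2 : (3 * psum 6 x * psum 2 x ^ 2) ^ 3 ≤ 27 * (u * v * w) := by
      have huvw : u * v * w = (psum 6 x * (psum 4 x * psum 8 x)) * psum 2 x ^ 6 := by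
        rw [hU, hV, hW]
        linear_combination (psum 2 x ^ 6 * psum 6 x * psum 4 x * psum 8 x) * h
      rw [huvw]
      have : psum 6 x ^ 3 ≤ psum 6 x * (psum 4 x * psum 8 x) := by
        nlinarith [hcs, hp6]
      nlinarith [pow_nonneg hp2 6, this, mul_le_mul_of_nonneg_right this (pow_nonneg hp2 6)]
    linarith
  have h3 : 3 * psum 6 x * psum 2 x ^ 2 ≤ u + v + w := by
    have hnn : 0 ≤ 3 * psum 6 x * psum 2 x ^ 2 := by positivity
    exact le_of_pow_le_pow_left₀ (by norm_num) (by linarith) key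
  linarith [h3]
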